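/- Let B be an abelian group. For each positive integer n let B[n] = {x ∈ B : n·x = 0} be the n-torsion subgroup, and order the positive integers by divisibility, with transition map B[m] → B[n] for n ∣ m given by x ↦ (m/n)·x. Then the map sending an additive homomorphism h : ℚ/ℤ → B to the family (h(1/n + ℤ))_{n ≥ 1} is a group isomorphism from Hom(ℚ/ℤ, B) onto the inverse limit T B = lim_n B[n] of this system (i.e., onto the subgroup of ∏_n B[n] consisting of families (x_n) with x_n = (m/n)·x_m whenever n ∣ m). -/

import Mathlib

/-- **The total Tate module as `Hom(ℚ/ℤ, B)`.**
Let `B` be an abelian group. For positive integers ordered by divisibility, with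
transition maps `B[m] → B[n]`, `x ↦ (m/n) • x` for `n ∣ m`, the map sending an
additive homomorphism `h : ℚ/ℤ → B` to the family `(h (1/n))_{n ≥ 1}` is a group
isomorphism from `Hom(ℚ/ℤ, B)` onto the inverse limit `T B = lim_n B[n]`, i.e.
it is additive, injective, its image consists of compatible families of torsion
elements, and every such compatible family arises this way.
Here `ℚ/ℤ` is realized as `AddCircle (1 : ℚ)`. -/
theorem homQZ_equiv_totalTateModule {B : Type*} [AddCommGroup B]
    (Φ : (AddCircle (1 : ℚ) →+ B) → (ℕ+ → B))
    (hΦ : ∀ (h : AddCircle (1 : ℚ) →+ B) (n : ℕ+),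
      Φ h n = h ((((n : ℕ) : ℚ)⁻¹ : ℚ) : AddCircle (1 : ℚ))) :
    (∀ (h : AddCircle (1 : ℚ) →+ B) (n : ℕ+), (n : ℕ) • Φ h n = 0) ∧
    (∀ (h : AddCircle (1 : ℚ) →+ B) (n m : ℕ+), (n : ℕ) ∣ (m : ℕ) →
      Φ h n = ((m : ℕ) / (n : ℕ)) • Φ h m) ∧
    (∀ h₁ h₂ : AddCircle (1 : ℚ) →+ B, Φ (h₁ + h₂) = Φ h₁ + Φ h₂) ∧
    Function.Injective Φ ∧
    (∀ x : ℕ+ → B, (∀ n : ℕ+, (n : ℕ) • x n = 0) →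
      (∀ n m : ℕ+, (n : ℕ) ∣ (m : ℕ) → x n = ((m : ℕ) / (n : ℕ)) • x m) →
      ∃ h : AddCircle (1 : ℚ) →+ B, Φ h = x) := by
  have coe1 : ((1 : ℚ) : AddCircle (1 : ℚ)) = 0 := AddCircle.coe_period 1
  refine ⟨?_, ?_, ?_, ?_, ?_⟩
  · -- torsion
    intro h n
    rw [hΦ, ← map_nsmul, ← AddCircle.coe_nsmul]
    have : (n : ℕ) • (((n : ℕ) : ℚ)⁻¹ : ℚ) = 1 := by
      rw [nsmul_eq_mul, mul_inv_cancel₀]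
      exact_mod_cast n.ne_zero
    rw [this, coe1, map_zero]
  · -- compatibility
    intro h n m hnm
    rw [hΦ, hΦ, ← map_nsmul, ← AddCircle.coe_nsmul]
    congr 2
    rw [nsmul_eq_mul, Nat.cast_div hnm (by exact_mod_cast n.ne_zero),
      div_mul_eq_mul_div, mul_inv_cancel₀ (by exact_mod_cast m.ne_zero), one_div]
  · -- additivity
    intro h₁ h₂
    funext n
    simp [hΦ]
  · -- injectivity
    intro h₁ h₂ hh
    have hh' : ∀ n : ℕ+, h₁ ((((n : ℕ) : ℚ)⁻¹ : ℚ) : AddCircle (1 : ℚ)) =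
        h₂ ((((n : ℕ) : ℚ)⁻¹ : ℚ) : AddCircle (1 : ℚ)) := by
      intro n
      rw [← hΦ, ← hΦ, hh]
    have key : ∀ (h : AddCircle (1 : ℚ) →+ B) (q : ℚ),
        h (q : AddCircle (1 : ℚ)) =
          q.num • h ((((q.den : ℕ) : ℚ)⁻¹ : ℚ) : AddCircle (1 : ℚ)) := by
      intro h q
      rw [← map_zsmul, ← AddCircle.coe_zsmul]
      congr 2
      rw [zsmul_eq_mul, ← div_eq_mul_inv, Rat.num_div_den]
    ext q
    simp only [AddMonoidHom.comp_apply, QuotientAddGroup.mk'_apply]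
    show h₁ (q : AddCircle (1 : ℚ)) = h₂ (q : AddCircle (1 : ℚ))
    rw [key h₁ q, key h₂ q]
    exact congrArg (q.num • ·) (hh' ⟨q.den, q.pos⟩)
  · -- surjectivity
    intro x hx1 hx2
    have hx1' : x 1 = 0 := by simpa using hx1 1
    set f : ℚ → B := fun q => q.num • x ⟨q.den, q.pos⟩ with hf
    have hfn : ∀ (q : ℚ) (n : ℕ+), q.den ∣ (n : ℕ) →
        f q = (q.num * (((n : ℕ) / q.den : ℕ) : ℤ)) • x n := by
      intro q n hd
      rw [hf]
      dsimp only
      rw [hx2 ⟨q.den, q.pos⟩ n hd, mul_smul, natCast_zsmul]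
      rfl
    have hcast : ∀ (s : ℚ) (n : ℕ+), s.den ∣ (n : ℕ) →
        ((s.num * (((n : ℕ) / s.den : ℕ) : ℤ) : ℤ) : ℚ) = ((n : ℕ) : ℚ) * s := by
      intro s n hs
      have hden : ((s.den : ℚ)) ≠ 0 := by exact_mod_cast s.den_nz
      rw [Int.cast_mul, Int.cast_natCast, Nat.cast_div hs hden, mul_div_assoc',
        mul_comm (s.num : ℚ), mul_div_assoc, Rat.num_div_den]
    have hadd : ∀ q r : ℚ, f (q + r) = f q + f r := by
      intro q r
      set n : ℕ+ := ⟨q.den * r.den, Nat.mul_pos q.pos r.pos⟩ with hn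
      have h1 : q.den ∣ (n : ℕ) := Dvd.intro _ rfl
      have h2 : r.den ∣ (n : ℕ) := Dvd.intro_left _ rfl
      have h3 : (q + r).den ∣ (n : ℕ) := Rat.add_den_dvd q r
      rw [hfn q n h1, hfn r n h2, hfn (q + r) n h3, ← add_zsmul]
      congr 1
      have : (((q + r).num * (((n : ℕ) / (q + r).den : ℕ) : ℤ) : ℤ) : ℚ) =
          ((q.num * (((n : ℕ) / q.den : ℕ) : ℤ) +
            r.num * (((n : ℕ) / r.den : ℕ) : ℤ) : ℤ) : ℚ) := by
        rw [hcast _ n h3, Int.cast_add, hcast _ n h1, hcast _ n h2, mul_add]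
      exact_mod_cast this
    set F : ℚ →+ B := AddMonoidHom.mk' f hadd with hF
    have hker : ∀ z ∈ AddSubgroup.zmultiples (1 : ℚ), F z = 0 := by
      intro z hz
      obtain ⟨k, rfl⟩ := AddSubgroup.mem_zmultiples_iff.mp hz
      have : ((k • (1 : ℚ))) = ((k : ℚ)) := by rw [zsmul_eq_mul, mul_one]
      rw [this]
      show f (k : ℚ) = 0
      rw [hf]
      dsimp only
      have hd : (⟨((k : ℚ)).den, ((k : ℚ)).pos⟩ : ℕ+) = (1 : ℕ+) := Subtype.ext (Rat.den_intCast k)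
      rw [hd, hx1', smul_zero]
    refine ⟨QuotientAddGroup.lift (AddSubgroup.zmultiples (1 : ℚ)) F hker, funext fun n => ?_⟩
    rw [hΦ]
    have : QuotientAddGroup.lift (AddSubgroup.zmultiples (1 : ℚ)) F hker
        ((((n : ℕ) : ℚ)⁻¹ : ℚ) : AddCircle (1 : ℚ)) = F (((n : ℕ) : ℚ)⁻¹) :=
      QuotientAddGroup.lift_mk' _ _ _
    rw [this]
    show f (((n : ℕ) : ℚ)⁻¹) = x n
    rw [hf]
    dsimp only
    have hnum : (((n : ℕ) : ℚ)⁻¹).num = 1 := Rat.inv_natCast_num_of_pos n.pos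
    have hden : (⟨(((n : ℕ) : ℚ)⁻¹).den, (((n : ℕ) : ℚ)⁻¹).pos⟩ : ℕ+) = n :=
      Subtype.ext (Rat.inv_natCast_den_of_pos n.pos)
    rw [hnum, hden, one_smul]
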